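/- arXiv:2407.19047 — 5 statements merged into one kernel-verified Lean document; each statement's English description precedes it below -/
import Mathlib

section
/- Let n ≥ 5 be odd and let X be a transitive subgroup of the symmetric group S_n that contains an (n−2)-cycle. Then X is 3-transitive. -/
/-- A fixed-point-free involution cannot exist on a set of odd cardinality. -/
lemma no_fpf_involution {n : ℕ} (hodd : Odd n) (f : Fin n → Fin n)
    (hinv : ∀ x, f (f x) = x) (hne : ∀ x, f x ≠ x) : False := by
  classical
  set s : Finset (Fin n) := Finset.univ.filter (fun x => x < f x) with hs
  set t : Finset (Fin n) := Finset.univ.filter (fun x => f x < x) with ht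
  have hst : s.card = t.card := by
    apply Finset.card_bij (fun x _ => f x)
    · intro a ha
      simp only [s, t, Finset.mem_filter, Finset.mem_univ, true_and] at *
      rw [hinv]; exact ha
    · intro a _ b _ hab
      have := congrArg f hab; rwa [hinv, hinv] at this
    · intro b hb
      refine ⟨f b, ?_, (hinv b)⟩
      simp only [s, t, Finset.mem_filter, Finset.mem_univ, true_and] at *
      rw [hinv]; exact hb
  have hdisj : Disjoint s t := by
    rw [Finset.disjoint_left]
    intro a ha hat
    simp only [s, t, Finset.mem_filter, Finset.mem_univ, true_and] at ha hat
    exact absurd (ha.trans hat) (lt_irrefl a)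
  have hunion : s ∪ t = Finset.univ := by
    ext a
    simp only [s, t, Finset.mem_union, Finset.mem_filter, Finset.mem_univ, true_and,
      iff_true]
    rcases lt_or_gt_of_ne (Ne.symm (hne a)) with h | h
    · exact Or.inl h
    · exact Or.inr h
  have hcard : n = 2 * s.card := by
    have h := Finset.card_union_of_disjoint hdisj
    rw [hunion, Finset.card_univ, Fintype.card_fin, hst] at h
    omega
  rcases hodd with ⟨k, hk⟩
  omega

theorem Equiv.Perm.inv_apply_self {α : Type*} (f : Equiv.Perm α) (x : α) : f⁻¹ (f x) = x :=
  f.symm_apply_apply x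

theorem Equiv.Perm.apply_inv_self {α : Type*} (f : Equiv.Perm α) (x : α) : f (f⁻¹ x) = x :=
  f.apply_symm_apply x

/-- Let `n ≥ 5` be odd and let `X` be a transitive subgroup of the symmetric group on
`n` points that contains an `(n-2)`-cycle.  Then `X` is 3-transitive. -/
theorem stmt_0 (n : ℕ) (hn : 5 ≤ n) (hodd : Odd n)
    (X : Subgroup (Equiv.Perm (Fin n)))
    (htrans : ∀ a b : Fin n, ∃ σ ∈ X, σ a = b)
    (g : Equiv.Perm (Fin n)) (hg : g ∈ X) (hcyc : g.IsCycle)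
    (hsupp : g.support.card = n - 2) :
    ∀ a₁ a₂ a₃ b₁ b₂ b₃ : Fin n,
      a₁ ≠ a₂ → a₁ ≠ a₃ → a₂ ≠ a₃ → b₁ ≠ b₂ → b₁ ≠ b₃ → b₂ ≠ b₃ →
      ∃ σ ∈ X, σ a₁ = b₁ ∧ σ a₂ = b₂ ∧ σ a₃ = b₃ := by
  classical
  -- the two fixed points of g
  have hc : g.supportᶜ.card = 2 := by
    have hle : g.support.card ≤ n := by
      simpa using Finset.card_le_univ g.support
    rw [Finset.card_compl, Fintype.card_fin, hsupp]
    omega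
  obtain ⟨p, q, hpq, hset⟩ := Finset.card_eq_two.mp hc
  have hmem : ∀ x : Fin n, g x = x ↔ (x = p ∨ x = q) := by
    intro x
    rw [← Equiv.Perm.notMem_support, ← Finset.mem_compl, hset]
    simp
  have hgp : g p = p := (hmem p).mpr (Or.inl rfl)
  -- powers of g act transitively off {p, q}
  have hcycle : ∀ x y : Fin n, x ≠ p → x ≠ q → y ≠ p → y ≠ q →
      ∃ i : ℤ, (g ^ i) x = y := by
    intro x y hxp hxq hyp hyq
    have hx : g x ≠ x := fun h => by rcases (hmem x).mp h with h | h <;> simp_all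
    have hy : g y ≠ y := fun h => by rcases (hmem y).mp h with h | h <;> simp_all
    exact hcyc.sameCycle hx hy
  -- partner structure: each point x has a partner y with a conjugate cycle fixing x, y
  have partner : ∀ x : Fin n, ∃ y : Fin n, y ≠ x ∧ ∃ h ∈ X, h x = x ∧ h y = y ∧
      (∀ z w : Fin n, z ≠ x → z ≠ y → w ≠ x → w ≠ y →
        ∃ i : ℤ, ((h : Equiv.Perm (Fin n)) ^ i) z = w) := by
    intro x
    obtain ⟨σ, hσ, hσp⟩ := htrans p x
    refine ⟨σ q, ?_, σ * g * σ⁻¹, mul_mem (mul_mem hσ hg) (inv_mem hσ), ?_, ?_, ?_⟩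
    · intro h
      exact hpq (σ.injective (by rw [h, hσp])).symm
    · simp only [Equiv.Perm.mul_apply]
      rw [← hσp, Equiv.Perm.inv_apply_self, hgp, hσp]
    · simp only [Equiv.Perm.mul_apply]
      rw [Equiv.Perm.inv_apply_self, (hmem q).mpr (Or.inr rfl)]
    · intro z w hzx hzy hwx hwy
      have hz1 : σ⁻¹ z ≠ p := by
        intro h; apply hzx; rw [← hσp, ← h, Equiv.Perm.apply_inv_self]
      have hz2 : σ⁻¹ z ≠ q := by
        intro h; apply hzy; rw [← h, Equiv.Perm.apply_inv_self]
      have hw1 : σ⁻¹ w ≠ p := by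
        intro h; apply hwx; rw [← hσp, ← h, Equiv.Perm.apply_inv_self]
      have hw2 : σ⁻¹ w ≠ q := by
        intro h; apply hwy; rw [← h, Equiv.Perm.apply_inv_self]
      obtain ⟨i, hi⟩ := hcycle (σ⁻¹ z) (σ⁻¹ w) hz1 hz2 hw1 hw2
      refine ⟨i, ?_⟩
      have hconj : (σ * g * σ⁻¹) ^ i = σ * g ^ i * σ⁻¹ := by
        have := map_zpow (MulAut.conj σ) g i
        simp only [MulAut.conj_apply] at this; exact this.symm
      rw [hconj]
      simp only [Equiv.Perm.mul_apply]
      rw [hi, Equiv.Perm.apply_inv_self]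
  -- Pt u : the stabilizer of u is transitive on the rest
  set Pt : Fin n → Prop := fun u => ∀ v w : Fin n, v ≠ u → w ≠ u →
    ∃ τ ∈ X, τ u = u ∧ τ v = w with hPt
  -- Claim B: some point has transitive stabilizer
  have claimB : ∃ u, Pt u := by
    by_contra hno
    push_neg at hno
    -- for each x, every element of the stabilizer of x fixes the partner of x
    have key : ∀ x : Fin n, ∀ τ ∈ X, τ x = x →
        τ (Classical.choose (partner x)) = Classical.choose (partner x) := by
      intro x τ hτ hτx
      by_contra hmove
      obtain ⟨hyx, h, hh, hhx, hhy, hhtrans⟩ := Classical.choose_spec (partner x)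
      set y := Classical.choose (partner x)
      apply hno x
      intro v w hvx hwx
      rcases eq_or_ne v w with rfl | hvw
      · exact ⟨1, one_mem X, rfl, rfl⟩
      have hz_x : τ y ≠ x := fun hc => hyx (τ.injective (by rw [hc, hτx]))
      rcases eq_or_ne v y with hvy | hvy
      · -- v = y : use h^i ∘ τ
        have hwy : w ≠ y := fun hc => hvw (hvy.trans hc.symm)
        obtain ⟨i, hi⟩ := hhtrans (τ y) w hz_x hmove hwx hwy
        refine ⟨h ^ i * τ, mul_mem (Subgroup.zpow_mem X hh i) hτ, ?_, ?_⟩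
        · simp only [Equiv.Perm.mul_apply]
          rw [hτx, Equiv.Perm.zpow_apply_eq_self_of_apply_eq_self hhx]
        · simp only [Equiv.Perm.mul_apply, hvy, hi]
      rcases eq_or_ne w y with hwy | hwy
      · -- w = y : use τ⁻¹ ∘ h^i
        obtain ⟨i, hi⟩ := hhtrans v (τ y) hvx hvy hz_x hmove
        refine ⟨τ⁻¹ * (h ^ i), mul_mem (inv_mem hτ) (Subgroup.zpow_mem X hh i), ?_, ?_⟩
        · simp only [Equiv.Perm.mul_apply]
          rw [Equiv.Perm.zpow_apply_eq_self_of_apply_eq_self hhx]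
          exact τ.injective (by rw [Equiv.Perm.apply_inv_self, hτx])
        · simp only [Equiv.Perm.mul_apply]
          rw [hi, Equiv.Perm.inv_apply_self, hwy]
      · -- both v, w ≠ y : use h^i
        obtain ⟨i, hi⟩ := hhtrans v w hvx hvy hwx hwy
        exact ⟨h ^ i, Subgroup.zpow_mem X hh i,
          Equiv.Perm.zpow_apply_eq_self_of_apply_eq_self hhx i, hi⟩
    -- build the fixed-point-free involution
    have hne : ∀ x, Classical.choose (partner x) ≠ x := fun x =>
      (Classical.choose_spec (partner x)).1
    have hinv : ∀ x, Classical.choose (partner (Classical.choose (partner x))) = x := by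
      intro x
      obtain ⟨hyx, h, hh, hhx, hhy, hhtrans⟩ := Classical.choose_spec (partner x)
      set y := Classical.choose (partner x)
      set z := Classical.choose (partner y)
      have hzy : z ≠ y := hne y
      have hz : h z = z := key y h hh hhy
      by_contra hzx
      -- h fixes z with z ≠ x, z ≠ y : contradiction with transitivity of h off {x,y}
      -- pick w different from z, x, y
      have hcard3 : ({z, x, y} : Finset (Fin n)).card ≤ 3 := by
        apply le_trans (Finset.card_insert_le _ _)
        have := Finset.card_insert_le x ({y} : Finset (Fin n))
        simp at this ⊢
        omega
      have hex : (({z, x, y} : Finset (Fin n))ᶜ).Nonempty := by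
        rw [← Finset.card_pos, Finset.card_compl, Fintype.card_fin]
        omega
      obtain ⟨w, hw⟩ := hex
      simp only [Finset.mem_compl, Finset.mem_insert, Finset.mem_singleton, not_or] at hw
      obtain ⟨hwz, hwx, hwy⟩ := hw
      obtain ⟨i, hi⟩ := hhtrans z w hzx hzy hwx hwy
      rw [Equiv.Perm.zpow_apply_eq_self_of_apply_eq_self hz] at hi
      exact hwz hi.symm
    exact no_fpf_involution hodd (fun x => Classical.choose (partner x)) hinv hne
  -- Claim A: 2-transitivity
  obtain ⟨u, hu⟩ := claimB
  have two_trans : ∀ a b c d : Fin n, a ≠ b → c ≠ d →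
      ∃ σ ∈ X, σ a = c ∧ σ b = d := by
    intro a b c d hab hcd
    obtain ⟨σ₁, hσ₁, hσ₁a⟩ := htrans a u
    obtain ⟨σ₂, hσ₂, hσ₂c⟩ := htrans c u
    have h1 : σ₁ b ≠ u := fun hc => hab (σ₁.injective (by rw [hc, hσ₁a]))
    have h2 : σ₂ d ≠ u := fun hc => hcd (σ₂.injective (by rw [hc, hσ₂c]))
    obtain ⟨τ, hτ, hτu, hτv⟩ := hu (σ₁ b) (σ₂ d) h1 h2
    refine ⟨σ₂⁻¹ * τ * σ₁, mul_mem (mul_mem (inv_mem hσ₂) hτ) hσ₁, ?_, ?_⟩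
    · simp only [Equiv.Perm.mul_apply]
      rw [hσ₁a, hτu, ← hσ₂c, Equiv.Perm.inv_apply_self]
    · simp only [Equiv.Perm.mul_apply]
      rw [hτv, Equiv.Perm.inv_apply_self]
  -- conclude 3-transitivity
  intro a₁ a₂ a₃ b₁ b₂ b₃ h12 h13 h23 k12 k13 k23
  obtain ⟨σ, hσ, hσ1, hσ2⟩ := two_trans a₁ a₂ p q h12 hpq
  obtain ⟨τ, hτ, hτ1, hτ2⟩ := two_trans b₁ b₂ p q k12 hpq
  have hs1 : σ a₃ ≠ p := fun hc => h13 (σ.injective (by rw [hc, hσ1])).symm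
  have hs2 : σ a₃ ≠ q := fun hc => h23 (σ.injective (by rw [hc, hσ2])).symm
  have ht1 : τ b₃ ≠ p := fun hc => k13 (τ.injective (by rw [hc, hτ1])).symm
  have ht2 : τ b₃ ≠ q := fun hc => k23 (τ.injective (by rw [hc, hτ2])).symm
  obtain ⟨i, hi⟩ := hcycle (σ a₃) (τ b₃) hs1 hs2 ht1 ht2
  refine ⟨τ⁻¹ * g ^ i * σ, mul_mem (mul_mem (inv_mem hτ) (Subgroup.zpow_mem X hg i)) hσ,
    ?_, ?_, ?_⟩
  · simp only [Equiv.Perm.mul_apply]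
    rw [hσ1, Equiv.Perm.zpow_apply_eq_self_of_apply_eq_self hgp, ← hτ1,
      Equiv.Perm.inv_apply_self]
  · simp only [Equiv.Perm.mul_apply]
    rw [hσ2, Equiv.Perm.zpow_apply_eq_self_of_apply_eq_self ((hmem q).mpr (Or.inr rfl)),
      ← hτ2, Equiv.Perm.inv_apply_self]
  · simp only [Equiv.Perm.mul_apply]
    rw [hi, Equiv.Perm.inv_apply_self]
end

section
/- Let n ≥ 5 be odd and let X be a primitive subgroup of S_n containing an (n−2)-cycle g fixing points 1 and 2. If the point stabilizer Stab_X(1) is not transitive on {2,...,n}, then Stab_X(1) = Stab_X(2). -/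
/-- Let `n ≥ 5` be odd and let `X` be a primitive subgroup of `S_n` containing an
`(n-2)`-cycle `g` fixing two points `p₁` and `p₂`.  If the point stabilizer of `p₁`
is not transitive on the remaining points, then the stabilizers of `p₁` and of `p₂`
in `X` coincide. -/
theorem stmt_1 (n : ℕ) (hn : 5 ≤ n) (hodd : Odd n)
    (X : Subgroup (Equiv.Perm (Fin n)))
    (htrans : ∀ a b : Fin n, ∃ σ ∈ X, σ a = b)
    (hprim : ∀ B : Set (Fin n),
      (∀ σ ∈ X, (fun x => σ x) '' B = B ∨ Disjoint ((fun x => σ x) '' B) B) →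
      B.Subsingleton ∨ B = Set.univ)
    (g : Equiv.Perm (Fin n)) (hg : g ∈ X) (hcyc : g.IsCycle)
    (hsupp : g.support.card = n - 2)
    (p₁ p₂ : Fin n) (hp : p₁ ≠ p₂) (h1 : g p₁ = p₁) (h2 : g p₂ = p₂)
    (hnotrans : ¬ ∀ c d : Fin n, c ≠ p₁ → d ≠ p₁ →
      ∃ σ ∈ X, σ p₁ = p₁ ∧ σ c = d) :
    ∀ σ ∈ X, (σ p₁ = p₁ ↔ σ p₂ = p₂) := by
  classical
  -- Every point other than p₁, p₂ is in the support of g.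
  have hmemsupp : ∀ x : Fin n, x ≠ p₁ → x ≠ p₂ → g x ≠ x := by
    intro x hx1 hx2
    have hsub : ({p₁, p₂} : Finset (Fin n)) ⊆ g.supportᶜ := by
      intro y hy
      simp only [Finset.mem_insert, Finset.mem_singleton] at hy
      rcases hy with rfl | rfl <;> simp [Equiv.Perm.mem_support, h1, h2]
    have hcardc : g.supportᶜ.card = 2 := by
      have := Finset.card_compl (g.support) (α := Fin n)
      rw [this, hsupp, Fintype.card_fin]
      omega
    have hpair : ({p₁, p₂} : Finset (Fin n)).card = 2 := by
      rw [Finset.card_insert_of_notMem (by simpa using hp), Finset.card_singleton]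
    have heq : ({p₁, p₂} : Finset (Fin n)) = g.supportᶜ :=
      Finset.eq_of_subset_of_card_le hsub (by omega)
    have : x ∈ g.support := by
      by_contra hxs
      have : x ∈ g.supportᶜ := Finset.mem_compl.mpr hxs
      rw [← heq] at this
      simp only [Finset.mem_insert, Finset.mem_singleton] at this
      tauto
    exact Equiv.Perm.mem_support.mp this
  -- Key step: every element of X fixing p₁ fixes p₂.
  have key : ∀ τ ∈ X, τ p₁ = p₁ → τ p₂ = p₂ := by
    intro τ hτX hτ1
    by_contra hτ2
    apply hnotrans
    -- helper: move p₂ to any point ≠ p₁ while fixing p₁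
    have helper : ∀ e : Fin n, e ≠ p₁ → ∃ ρ ∈ X, ρ p₁ = p₁ ∧ ρ p₂ = e := by
      intro e he1
      by_cases he2 : e = p₂
      · exact ⟨1, X.one_mem, rfl, by simp [he2]⟩
      · have hge : g e ≠ e := hmemsupp e he1 he2
        have ha1 : τ p₂ ≠ p₁ := by
          intro h
          exact hp (τ.injective (hτ1.trans h.symm))
        have ha : g (τ p₂) ≠ τ p₂ := hmemsupp _ ha1 hτ2
        obtain ⟨k, hk⟩ := (hcyc.sameCycle ha hge)
        refine ⟨g ^ k * τ, X.mul_mem (X.zpow_mem hg k) hτX, ?_, ?_⟩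
        · simp only [Equiv.Perm.mul_apply, hτ1]
          exact Equiv.Perm.zpow_apply_eq_self_of_apply_eq_self h1 k
        · simpa [Equiv.Perm.mul_apply] using hk
    intro c d hc hd
    obtain ⟨ρc, hρcX, hρc1, hρc2⟩ := helper c hc
    obtain ⟨ρd, hρdX, hρd1, hρd2⟩ := helper d hd
    refine ⟨ρd * ρc⁻¹, X.mul_mem hρdX (X.inv_mem hρcX), ?_, ?_⟩
    · have : ρc⁻¹ p₁ = p₁ := by
        apply ρc.injective; rw [← Equiv.Perm.mul_apply, mul_inv_cancel, Equiv.Perm.one_apply, hρc1]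
      simp [Equiv.Perm.mul_apply, this, hρd1]
    · have : ρc⁻¹ c = p₂ := by
        apply ρc.injective; rw [← Equiv.Perm.mul_apply, mul_inv_cancel, Equiv.Perm.one_apply, hρc2]
      simp [Equiv.Perm.mul_apply, this, hρd2]
  -- Now compare stabilizers via the orbit-stabilizer theorem.
  letI : MulAction.IsPretransitive X (Fin n) := by
    constructor
    intro a b
    obtain ⟨σ, hσ, h⟩ := htrans a b
    exact ⟨⟨σ, hσ⟩, h⟩
  have hidx1 : (MulAction.stabilizer X p₁).index = n := by
    rw [MulAction.index_stabilizer_of_transitive, Nat.card_eq_fintype_card, Fintype.card_fin]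
  have hidx2 : (MulAction.stabilizer X p₂).index = n := by
    rw [MulAction.index_stabilizer_of_transitive, Nat.card_eq_fintype_card, Fintype.card_fin]
  have hle : MulAction.stabilizer X p₁ ≤ MulAction.stabilizer X p₂ := by
    intro x hx
    have hx' : (x : Equiv.Perm (Fin n)) p₁ = p₁ := hx
    exact key x x.2 hx'
  have hcard1 := Subgroup.card_mul_index (MulAction.stabilizer X p₁)
  have hcard2 := Subgroup.card_mul_index (MulAction.stabilizer X p₂)
  have hn0 : n ≠ 0 := by omega
  have hcardeq : Nat.card (MulAction.stabilizer X p₂) ≤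
      Nat.card (MulAction.stabilizer X p₁) := by
    rw [hidx1] at hcard1
    rw [hidx2] at hcard2
    have := hcard1.trans hcard2.symm
    exact Nat.le_of_eq (Nat.eq_of_mul_eq_mul_right (by omega) this).symm
  have heq : MulAction.stabilizer X p₁ = MulAction.stabilizer X p₂ :=
    Subgroup.eq_of_le_of_card_ge hle hcardeq
  intro σ hσ
  have := SetLike.ext_iff.mp heq ⟨σ, hσ⟩
  simpa [MulAction.mem_stabilizer_iff] using this
end

section
/- Let n ≥ 5 be odd, let X ≤ S_n be an imprimitive transitive subgroup, and suppose g ∈ X is an (n−2)-cycle. Then a contradiction arises; equivalently, no imprimitive transitive subgroup of S_n (n ≥ 5 odd) contains an (n−2)-cycle. -/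
open Pointwise


/-- No imprimitive transitive subgroup of `S_n` (`n ≥ 5` odd) contains an
`(n-2)`-cycle: from a transitive subgroup `X` preserving a nontrivial block `B`
and containing an `(n-2)`-cycle one derives a contradiction. -/
theorem stmt_3 (n : ℕ) (hn : 5 ≤ n) (hodd : Odd n)
    (X : Subgroup (Equiv.Perm (Fin n)))
    (htrans : ∀ a b : Fin n, ∃ σ ∈ X, σ a = b)
    (B : Set (Fin n))
    (hblock : ∀ σ ∈ X, (fun x => σ x) '' B = B ∨ Disjoint ((fun x => σ x) '' B) B)
    (hB1 : 1 < B.ncard) (hB2 : B ≠ Set.univ)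
    (g : Equiv.Perm (Fin n)) (hg : g ∈ X) (hcyc : g.IsCycle)
    (hsupp : g.support.card = n - 2) :
    False := by
  classical
  -- set up the action of X on Fin n
  haveI : MulAction.IsPretransitive X (Fin n) := by
    constructor
    intro a b
    obtain ⟨σ, hσ, h⟩ := htrans a b
    exact ⟨⟨σ, hσ⟩, h⟩
  have hsmul : ∀ (σ : X) (S : Set (Fin n)), σ • S = (fun x => (σ : Equiv.Perm (Fin n)) x) '' S :=
    fun σ S => rfl
  have hBlock : MulAction.IsBlock X B := by
    rw [MulAction.isBlock_iff_smul_eq_or_disjoint]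
    intro σ
    rw [hsmul]
    exact hblock σ σ.2
  -- divisibility
  have hBne : B.Nonempty := Set.nonempty_of_ncard_ne_zero (by omega)
  have hdvd : B.ncard ∣ n := by
    have := hBlock.ncard_dvd_card hBne
    rwa [Nat.card_eq_fintype_card, Fintype.card_fin] at this
  set t := B.ncard with ht
  have htn : t ≠ n := by
    intro h
    apply hB2
    apply Set.eq_of_subset_of_ncard_le (Set.subset_univ B) _ (Set.toFinite _)
    rw [Set.ncard_univ, Nat.card_eq_fintype_card, Fintype.card_fin]
    omega
  have htodd : Odd t := by
    rcases Nat.even_or_odd t with he | ho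
    · exfalso
      have h2 : (2 : ℕ) ∣ n := dvd_trans he.two_dvd hdvd
      rw [Nat.odd_iff] at hodd
      omega
    · exact ho
  have ht3 : 3 ≤ t := by
    rw [Nat.odd_iff] at htodd; omega
  have h3t : 3 * t ≤ n := by
    obtain ⟨k, hk⟩ := hdvd
    have hk2 : k ≠ 2 := by
      intro h
      subst h
      rw [Nat.odd_iff] at hodd
      omega
    have hk0 : k ≠ 0 := by intro h; rw [h] at hk; omega
    have hk1 : k ≠ 1 := by intro h; rw [h] at hk; omega
    have h3k : 3 ≤ k := by omega
    calc 3 * t ≤ t * k := by nlinarith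
    _ = n := hk.symm
  -- a fixed point of g
  have hne_univ : g.support ≠ Finset.univ := by
    intro h
    rw [h, Finset.card_univ, Fintype.card_fin] at hsupp
    omega
  obtain ⟨x, hx⟩ : ∃ x, x ∉ g.support := by
    by_contra h
    push_neg at h
    exact hne_univ (Finset.eq_univ_iff_forall.mpr h)
  have hgx : g x = x := Equiv.Perm.notMem_support.mp hx
  -- a block containing x
  obtain ⟨b, hb⟩ := hBne
  obtain ⟨σ, hσ, hσb⟩ := htrans b x
  set σX : X := ⟨σ, hσ⟩ with hσX
  have hB' : MulAction.IsBlock X (σX • B) := hBlock.translate σX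
  set B' : Set (Fin n) := σX • B with hB'def
  have hxB' : x ∈ B' := ⟨b, hb, hσb⟩
  set gX : X := ⟨g, hg⟩ with hgX
  have hgB' : gX • B' = B' := by
    apply hB'.smul_eq_of_mem hxB'
    show g x ∈ B'
    rw [hgx]; exact hxB'
  have hgB'' : (fun y => g y) '' B' = B' := by
    rw [← hsmul gX B']; exact hgB'
  have hpow : ∀ k : ℕ, (fun y => (g ^ k) y) '' B' = B' := by
    intro k
    induction k with
    | zero => simp
    | succ k ih =>
      rw [pow_succ']
      have heq : (fun y => (g * g ^ k) y) '' B' = (fun y => g y) '' ((fun y => (g ^ k) y) '' B') := by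
        rw [Set.image_image]
        rfl
      rw [heq, ih, hgB'']
  have hncard : B'.ncard = t := by
    rw [hB'def, hsmul]
    exact Set.ncard_image_of_injective B σ.injective
  -- B' meets the support of g
  have hmeets : ∃ y ∈ B', y ∈ g.support := by
    by_contra h
    push_neg at h
    have hsub : B' ⊆ ((g.supportᶜ : Finset (Fin n)) : Set (Fin n)) := by
      intro y hy; simpa using h y hy
    have hle := Set.ncard_le_ncard hsub (Set.toFinite _)
    rw [Set.ncard_coe_finset, Finset.card_compl, Fintype.card_fin, hsupp, hncard] at hle
    omega
  obtain ⟨y, hyB', hy⟩ := hmeets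
  -- the whole support of g is inside B'
  have hsuppsub : ∀ z ∈ g.support, z ∈ B' := by
    intro z hz
    obtain ⟨k, hk⟩ := hcyc.exists_pow_eq (Equiv.Perm.mem_support.mp hy)
      (Equiv.Perm.mem_support.mp hz)
    rw [← hk, ← hpow k]
    exact ⟨y, hyB', rfl⟩
  have hfin : (n - 2 : ℕ) ≤ t := by
    have hsub : ((g.support : Finset (Fin n)) : Set (Fin n)) ⊆ B' := fun z hz =>
      hsuppsub z (by simpa using hz)
    have hle := Set.ncard_le_ncard hsub (Set.toFinite _)
    rwa [Set.ncard_coe_finset, hsupp, hncard] at hle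
  omega
end

section
/- Let p be a prime and r ≥ 1. If a subgroup H ≤ SL_2(ℤ/p^r) contains the elementary matrices [[1,a],[0,1]] and [[1,0],[b,1]] for some a, b ∈ ℤ/p^r both coprime to p, then H = SL_2(ℤ/p^r). -/
open Matrix

namespace Stmt6Aux

variable {R : Type*} [CommRing R]

/-- Upper elementary matrix. -/
def Em (x : R) : SpecialLinearGroup (Fin 2) R :=
  ⟨!![1, x; 0, 1], by simp [Matrix.det_fin_two_of]⟩

/-- Lower elementary matrix. -/
def Lm (x : R) : SpecialLinearGroup (Fin 2) R :=
  ⟨!![1, 0; x, 1], by simp [Matrix.det_fin_two_of]⟩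

lemma Em_mul (x y : R) : Em x * Em y = Em (x + y) := by
  apply Subtype.ext
  show (!![1, x; 0, 1] : Matrix (Fin 2) (Fin 2) R) * !![1, y; 0, 1] = _
  ext i j
  fin_cases i <;> fin_cases j <;>
    simp [Em, Matrix.mul_apply, Fin.sum_univ_two, add_comm]

lemma Lm_mul (x y : R) : Lm x * Lm y = Lm (x + y) := by
  apply Subtype.ext
  show (!![1, 0; x, 1] : Matrix (Fin 2) (Fin 2) R) * !![1, 0; y, 1] = _
  ext i j
  fin_cases i <;> fin_cases j <;>
    simp [Lm, Matrix.mul_apply, Fin.sum_univ_two, add_comm]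

lemma Em_pow (x : R) (n : ℕ) : Em x ^ n = Em (n • x) := by
  induction n with
  | zero =>
    apply Subtype.ext
    show (1 : Matrix (Fin 2) (Fin 2) R) = _
    ext i j
    fin_cases i <;> fin_cases j <;> simp [Em]
  | succ n ih => rw [pow_succ, ih, Em_mul, succ_nsmul]

lemma Lm_pow (x : R) (n : ℕ) : Lm x ^ n = Lm (n • x) := by
  induction n with
  | zero =>
    apply Subtype.ext
    show (1 : Matrix (Fin 2) (Fin 2) R) = _
    ext i j
    fin_cases i <;> fin_cases j <;> simp [Lm]
  | succ n ih => rw [pow_succ, ih, Lm_mul, succ_nsmul]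

/-- Decomposition of an SL₂ matrix whose lower-left entry is a unit. -/
lemma decomp (M : SpecialLinearGroup (Fin 2) R) (u : Rˣ)
    (hu : (u : R) = (M : Matrix (Fin 2) (Fin 2) R) 1 0) :
    M = Em ((((M : Matrix (Fin 2) (Fin 2) R) 0 0) - 1) * ↑u⁻¹) *
        Lm ((M : Matrix (Fin 2) (Fin 2) R) 1 0) *
        Em ((((M : Matrix (Fin 2) (Fin 2) R) 1 1) - 1) * ↑u⁻¹) := by
  have hdet : ((M : Matrix (Fin 2) (Fin 2) R) 0 0) * ((M : Matrix (Fin 2) (Fin 2) R) 1 1) -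
      ((M : Matrix (Fin 2) (Fin 2) R) 0 1) * ((M : Matrix (Fin 2) (Fin 2) R) 1 0) = 1 := by
    have := M.2
    rwa [Matrix.det_fin_two] at this
  have huu : ((M : Matrix (Fin 2) (Fin 2) R) 1 0) * ↑u⁻¹ = 1 := by
    rw [← hu]; exact u.mul_inv
  apply Subtype.ext
  have hM : (M : Matrix (Fin 2) (Fin 2) R) =
      !![(M : Matrix (Fin 2) (Fin 2) R) 0 0, (M : Matrix (Fin 2) (Fin 2) R) 0 1;
        (M : Matrix (Fin 2) (Fin 2) R) 1 0, (M : Matrix (Fin 2) (Fin 2) R) 1 1] := by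
    ext i j; fin_cases i <;> fin_cases j <;> simp
  show (M : Matrix (Fin 2) (Fin 2) R) = _
  rw [hM]
  show _ = (!![1, (((M : Matrix (Fin 2) (Fin 2) R) 0 0) - 1) * ↑u⁻¹; 0, 1] *
      !![1, 0; (M : Matrix (Fin 2) (Fin 2) R) 1 0, 1]) *
      !![1, (((M : Matrix (Fin 2) (Fin 2) R) 1 1) - 1) * ↑u⁻¹; 0, 1]
  ext i j
  fin_cases i <;> fin_cases j <;>
    simp [Matrix.mul_apply, Fin.sum_univ_two]
  · linear_combination (1 - ((M : Matrix (Fin 2) (Fin 2) R) 0 0)) * huu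
  · linear_combination (-((M : Matrix (Fin 2) (Fin 2) R) 0 1)
      + ((M : Matrix (Fin 2) (Fin 2) R) 0 0) * (↑u⁻¹ : R)
      - ((M : Matrix (Fin 2) (Fin 2) R) 0 0) * (↑u⁻¹ : R) * ((M : Matrix (Fin 2) (Fin 2) R) 1 1)
      - (↑u⁻¹ : R) + (↑u⁻¹ : R) * ((M : Matrix (Fin 2) (Fin 2) R) 1 1)) * huu
      - (↑u⁻¹ : R) * hdet
  · linear_combination (1 - ((M : Matrix (Fin 2) (Fin 2) R) 1 1)) * huu

lemma isUnit_or (p r : ℕ) (hp : p.Prime) (hr : 1 ≤ r)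
    (α β γ δ : ZMod (p ^ r)) (hdet : α * δ - β * γ = 1) : IsUnit α ∨ IsUnit γ := by
  haveI : NeZero (p ^ r) := ⟨pow_ne_zero _ hp.ne_zero⟩
  haveI : Fact p.Prime := ⟨hp⟩
  by_contra h
  push_neg at h
  obtain ⟨h1, h2⟩ := h
  have key : ∀ x : ZMod (p ^ r), ¬IsUnit x → ((x.val : ℕ) : ZMod p) = 0 := by
    intro x hx
    rw [ZMod.natCast_eq_zero_iff]
    by_contra hdvd
    apply hx
    have hc : Nat.Coprime x.val p := ((Nat.Prime.coprime_iff_not_dvd hp).mpr hdvd).symm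
    have := (ZMod.isUnit_iff_coprime x.val (p ^ r)).mpr (hc.pow_right r)
    rwa [ZMod.natCast_val, ZMod.cast_id] at this
  let φ := ZMod.castHom (dvd_pow_self p (by omega : r ≠ 0)) (ZMod p)
  have hφ : ∀ x : ZMod (p ^ r), φ x = ((x.val : ℕ) : ZMod p) := fun x => by
    rw [ZMod.castHom_apply, ZMod.natCast_val]
  have h3 := congrArg φ hdet
  rw [map_sub, _root_.map_mul, _root_.map_mul, _root_.map_one, hφ α, hφ γ,
    key α h1, key γ h2] at h3
  simp at h3

lemma Em_mem (p r : ℕ) (hp : p.Prime) (a : ZMod (p ^ r)) (ha : IsUnit a)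
    (H : Subgroup (SpecialLinearGroup (Fin 2) (ZMod (p ^ r))))
    (hU : Em a ∈ H) (x : ZMod (p ^ r)) : Em x ∈ H := by
  haveI : NeZero (p ^ r) := ⟨pow_ne_zero _ hp.ne_zero⟩
  have hx : Em x = Em a ^ (x * a⁻¹).val := by
    rw [Em_pow, nsmul_eq_mul, ZMod.natCast_val, ZMod.cast_id, mul_assoc,
      ZMod.inv_mul_of_unit a ha, mul_one]
  rw [hx]
  exact pow_mem hU _

lemma Lm_mem (p r : ℕ) (hp : p.Prime) (b : ZMod (p ^ r)) (hb : IsUnit b)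
    (H : Subgroup (SpecialLinearGroup (Fin 2) (ZMod (p ^ r))))
    (hL : Lm b ∈ H) (x : ZMod (p ^ r)) : Lm x ∈ H := by
  haveI : NeZero (p ^ r) := ⟨pow_ne_zero _ hp.ne_zero⟩
  have hx : Lm x = Lm b ^ (x * b⁻¹).val := by
    rw [Lm_pow, nsmul_eq_mul, ZMod.natCast_val, ZMod.cast_id, mul_assoc,
      ZMod.inv_mul_of_unit b hb, mul_one]
  rw [hx]
  exact pow_mem hL _

/-- Any SL₂ matrix whose lower-left entry is a unit lies in a subgroup containing all
elementary matrices. -/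
lemma mem_of_isUnit_lowleft {H : Subgroup (SpecialLinearGroup (Fin 2) R)}
    (hE : ∀ x : R, Em x ∈ H) (hLall : ∀ x : R, Lm x ∈ H)
    (M : SpecialLinearGroup (Fin 2) R)
    (h : IsUnit ((M : Matrix (Fin 2) (Fin 2) R) 1 0)) : M ∈ H := by
  obtain ⟨u, hu⟩ := h
  rw [decomp M u hu]
  exact mul_mem (mul_mem (hE _) (hLall _)) (hE _)

end Stmt6Aux

/-- If a subgroup `H ≤ SL₂(ℤ/p^r)` contains the elementary matrices `[[1,a],[0,1]]`
and `[[1,0],[b,1]]` with `a, b` units, then `H = SL₂(ℤ/p^r)`. -/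
theorem stmt_6 (p : ℕ) (hp : p.Prime) (r : ℕ) (hr : 1 ≤ r)
    (a b : ZMod (p ^ r)) (ha : IsUnit a) (hb : IsUnit b)
    (H : Subgroup (Matrix.SpecialLinearGroup (Fin 2) (ZMod (p ^ r))))
    (hU : (⟨!![1, a; 0, 1], by simp [Matrix.det_fin_two_of]⟩ :
        Matrix.SpecialLinearGroup (Fin 2) (ZMod (p ^ r))) ∈ H)
    (hL : (⟨!![1, 0; b, 1], by simp [Matrix.det_fin_two_of]⟩ :
        Matrix.SpecialLinearGroup (Fin 2) (ZMod (p ^ r))) ∈ H) :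
    H = ⊤ := by
  open Stmt6Aux in
  have hE : ∀ x : ZMod (p ^ r), Em x ∈ H := Stmt6Aux.Em_mem p r hp a ha H hU
  have hLall : ∀ x : ZMod (p ^ r), Stmt6Aux.Lm x ∈ H := Stmt6Aux.Lm_mem p r hp b hb H hL
  rw [eq_top_iff]
  intro M _
  set R := ZMod (p ^ r)
  have hdet : (M : Matrix (Fin 2) (Fin 2) R) 0 0 * (M : Matrix (Fin 2) (Fin 2) R) 1 1 -
      (M : Matrix (Fin 2) (Fin 2) R) 0 1 * (M : Matrix (Fin 2) (Fin 2) R) 1 0 = 1 := by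
    have := M.2
    rwa [Matrix.det_fin_two] at this
  rcases Stmt6Aux.isUnit_or p r hp hr _ _ _ _ hdet with hα | hγ
  · -- upper-left entry is a unit: fix up the lower-left entry first
    set c : R := (1 - (M : Matrix (Fin 2) (Fin 2) R) 1 0) *
      ((M : Matrix (Fin 2) (Fin 2) R) 0 0)⁻¹ with hc
    have hentry : ((Stmt6Aux.Lm c * M : Matrix.SpecialLinearGroup (Fin 2) R) :
        Matrix (Fin 2) (Fin 2) R) 1 0 = 1 := by
      show (((Stmt6Aux.Lm c : Matrix (Fin 2) (Fin 2) R)) * (M : Matrix (Fin 2) (Fin 2) R)) 1 0 = 1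
      rw [Matrix.mul_apply, Fin.sum_univ_two]
      show c * _ + 1 * _ = 1
      rw [hc, one_mul, mul_assoc, ZMod.inv_mul_of_unit _ hα, mul_one]
      ring
    have hmem : Stmt6Aux.Lm c * M ∈ H :=
      Stmt6Aux.mem_of_isUnit_lowleft hE hLall _ (by rw [hentry]; exact isUnit_one)
    have := H.mul_mem (H.inv_mem (hLall c)) hmem
    rwa [inv_mul_cancel_left] at this
  · exact Stmt6Aux.mem_of_isUnit_lowleft hE hLall M hγ
end

section
/- Let n ≥ 5 be odd. The alternating group A_n is generated by an n-cycle u and an (n−2)-cycle v such that |u| = n, |v| = n−2, and these together with |uv| can be arranged so that |u|, |v|, |uv| are pairwise coprime; in particular, A_n admits a generating pair (u,v) with |u|, |v|, |uv| pairwise coprime. -/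
open Equiv Equiv.Perm Subgroup

private lemma coset_subgroup {G : Type*} [Group G] (H : Subgroup G) (w : G)
    (hw : w * w = 1) (hN : ∀ h ∈ H, w * h * w ∈ H) :
    ∃ K : Subgroup G, ∀ τ : G, τ ∈ K ↔ τ ∈ H ∨ w * τ ∈ H := by
  have hw' : ∀ c : G, w * (w * c) = c := fun c => by rw [← mul_assoc, hw, one_mul]
  have hwi : w⁻¹ = w := inv_eq_of_mul_eq_one_right hw
  refine ⟨{ carrier := {τ | τ ∈ H ∨ w * τ ∈ H}
            one_mem' := Or.inl H.one_mem
            mul_mem' := ?_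
            inv_mem' := ?_ }, fun τ => Iff.rfl⟩
  · rintro a b (ha | ha) (hb | hb)
    · exact Or.inl (H.mul_mem ha hb)
    · refine Or.inr ?_
      have e : w * (a * b) = (w * a * w) * (w * b) := by
        simp only [mul_assoc, hw']
      rw [e]; exact H.mul_mem (hN a ha) hb
    · refine Or.inr ?_
      have e : w * (a * b) = (w * a) * b := by rw [mul_assoc]
      rw [e]; exact H.mul_mem ha hb
    · refine Or.inl ?_
      have e : a * b = (w * (w * a) * w) * (w * b) := by
        simp only [mul_assoc, hw']
      rw [e]; exact H.mul_mem (hN _ ha) hb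
  · rintro a (ha | ha)
    · exact Or.inl (H.inv_mem ha)
    · refine Or.inr ?_
      have h1 : a⁻¹ * w ∈ H := by
        have := H.inv_mem ha
        rwa [mul_inv_rev, hwi] at this
      have e : w * a⁻¹ = w * (a⁻¹ * w) * w := by
        simp only [mul_assoc, hw', hw, mul_one]
      rw [e]; exact hN _ h1

/-- For odd `n ≥ 5`, the alternating group `A_n` is generated by an `n`-cycle `u` and an
`(n-2)`-cycle `v` such that the orders `|u| = n`, `|v| = n-2` and `|uv|` are pairwise
coprime. -/
theorem stmt_10 (n : ℕ) (hn : 5 ≤ n) (hodd : Odd n) :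
    ∃ u v : Equiv.Perm (Fin n),
      u ∈ alternatingGroup (Fin n) ∧ v ∈ alternatingGroup (Fin n) ∧
      u.IsCycle ∧ u.support.card = n ∧
      v.IsCycle ∧ v.support.card = n - 2 ∧
      orderOf u = n ∧ orderOf v = n - 2 ∧
      Subgroup.closure ({u, v} : Set (Equiv.Perm (Fin n))) = alternatingGroup (Fin n) ∧
      Nat.Coprime (orderOf u) (orderOf v) ∧
      Nat.Coprime (orderOf v) (orderOf (u * v)) ∧
      Nat.Coprime (orderOf u) (orderOf (u * v)) := by
  classical
  obtain ⟨u, hu_def⟩ : ∃ u' : Equiv.Perm (Fin n), u' = finRotate n := ⟨_, rfl⟩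
  have h2n : 2 ≤ n := by omega
  have h1 : u.IsCycle := by rw [hu_def]; exact isCycle_finRotate_of_le h2n
  have h2 : u.support = Finset.univ := by rw [hu_def]; exact support_finRotate_of_le h2n
  have hcard : u.support.card = n := by rw [h2, Finset.card_univ, Fintype.card_fin]
  have horder : orderOf u = n := by rw [h1.orderOf, hcard]
  have hupow : u ^ n = 1 := by
    have := pow_orderOf_eq_one u
    rwa [horder] at this
  obtain ⟨x⟩ : Nonempty (Fin n) := ⟨⟨0, by omega⟩⟩
  obtain ⟨p, hp_def⟩ : ∃ p' : ℕ → Fin n, p' = fun i => (u ^ i) x := ⟨_, rfl⟩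
  -- basic facts about the orbit points
  have hkey : ∀ (y : Fin n) (k : ℕ), 0 < k → k < n → (u ^ k) y ≠ y := by
    intro y k hk hkn hEq
    have hy : u y ≠ y := Equiv.Perm.mem_support.mp (h2 ▸ Finset.mem_univ y)
    have hone : u ^ k = 1 := (h1.pow_eq_one_iff' hy).mpr hEq
    have hdvd := orderOf_dvd_of_pow_eq_one hone
    rw [horder] at hdvd
    exact absurd (Nat.le_of_dvd hk hdvd) (by omega)
  have dist : ∀ i j : ℕ, i < j → j < n → p i ≠ p j := by
    intro i j hij hjn hEq
    apply hkey (p i) (j - i) (by omega) (by omega)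
    have e1 : (u ^ (j - i)) (p i) = (u ^ (j - i) * u ^ i) x := by
      simp only [hp_def]; rfl
    have e2 : (u ^ (j - i) * u ^ i) x = p j := by
      rw [← pow_add]
      have : j - i + i = j := by omega
      rw [this, hp_def]
    rw [e1, e2, ← hEq]
  have hstep : ∀ i : ℕ, u (p i) = p (i + 1) := by
    intro i
    simp only [hp_def]
    rw [pow_succ']
    rfl
  have happ : ∀ k i : ℕ, (u ^ k) (p i) = p (k + i) := by
    intro k i
    simp only [hp_def]
    rw [pow_add]
    rfl
  have hswap : ∀ k i j : ℕ,
      u ^ k * Equiv.swap (p i) (p j) * (u ^ k)⁻¹ = Equiv.swap (p (k + i)) (p (k + j)) := by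
    intro k i j
    rw [← happ k i, ← happ k j]
    exact (swap_apply_apply _ _ _).symm
  have d01 : p 0 ≠ p 1 := dist 0 1 (by omega) (by omega)
  have d02 : p 0 ≠ p 2 := dist 0 2 (by omega) (by omega)
  have d03 : p 0 ≠ p 3 := dist 0 3 (by omega) (by omega)
  have d04 : p 0 ≠ p 4 := dist 0 4 (by omega) (by omega)
  have d12 : p 1 ≠ p 2 := dist 1 2 (by omega) (by omega)
  have d13 : p 1 ≠ p 3 := dist 1 3 (by omega) (by omega)
  have d14 : p 1 ≠ p 4 := dist 1 4 (by omega) (by omega)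
  have d23 : p 2 ≠ p 3 := dist 2 3 (by omega) (by omega)
  have d24 : p 2 ≠ p 4 := dist 2 4 (by omega) (by omega)
  have hst0 : u (p 0) = p 1 := by simpa using hstep 0
  have hst1 : u (p 1) = p 2 := by simpa using hstep 1
  have hst2 : u (p 2) = p 3 := by simpa using hstep 2
  have hst3 : u (p 3) = p 4 := by simpa using hstep 3
  obtain ⟨w, hw_def⟩ : ∃ w' : Equiv.Perm (Fin n), w' = Equiv.swap (p 0) (p 1) := ⟨_, rfl⟩
  obtain ⟨g, hg_def⟩ : ∃ g' : Equiv.Perm (Fin n), g' = w * Equiv.swap (p 2) (p 3) := ⟨_, rfl⟩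
  obtain ⟨v, hv_def⟩ : ∃ v' : Equiv.Perm (Fin n), v' = u⁻¹ * g := ⟨_, rfl⟩
  have hww : w * w = 1 := by rw [hw_def]; exact swap_mul_self _ _
  have hwi : w⁻¹ = w := inv_eq_of_mul_eq_one_right hww
  have hwmul : ∀ c : Equiv.Perm (Fin n), w * (w * c) = c := by
    intro c; rw [hw_def]; exact swap_mul_self_mul _ _ _
  -- commutation of the two disjoint swaps
  have hcomm : Equiv.swap (p 0) (p 1) * Equiv.swap (p 2) (p 3)
      = Equiv.swap (p 2) (p 3) * Equiv.swap (p 0) (p 1) := by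
    have hdisj : (Equiv.swap (p 0) (p 1)).Disjoint (Equiv.swap (p 2) (p 3)) := by
      rw [Equiv.Perm.disjoint_iff_disjoint_support, Equiv.Perm.support_swap d01,
        Equiv.Perm.support_swap d23, Finset.disjoint_left]
      intro a ha hb
      simp only [Finset.mem_insert, Finset.mem_singleton] at ha hb
      rcases ha with rfl | rfl <;> rcases hb with h | h
      · exact d02 h
      · exact d03 h
      · exact d12 h
      · exact d13 h
    exact hdisj.commute.eq
  have hcommw : w * Equiv.swap (p 2) (p 3) = Equiv.swap (p 2) (p 3) * w := by
    rw [hw_def]; exact hcomm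
  -- u * v = g, and order of g
  have hguv : u * v = g := by rw [hv_def]; exact mul_inv_cancel_left u g
  have hg2 : g * g = 1 := by
    rw [hg_def, hw_def, mul_assoc,
      ← mul_assoc (Equiv.swap (p 2) (p 3)) (Equiv.swap (p 0) (p 1)) (Equiv.swap (p 2) (p 3)),
      ← hcomm, mul_assoc (Equiv.swap (p 0) (p 1)) (Equiv.swap (p 2) (p 3)) (Equiv.swap (p 2) (p 3)),
      swap_mul_self, mul_one, swap_mul_self]
  have hgne : g ≠ 1 := by
    intro hEq
    have h' : g (p 0) = p 0 := by rw [hEq]; rfl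
    rw [hg_def, hw_def, Equiv.Perm.mul_apply,
      Equiv.swap_apply_of_ne_of_ne d02 d03, Equiv.swap_apply_left] at h'
    exact d01 h'.symm
  have hordg : orderOf g = 2 := by
    refine orderOf_eq_prime ?_ hgne
    rw [pow_two]; exact hg2
  -- v is an (n-2)-cycle
  have hvinv : v⁻¹ = Equiv.swap (p 2) (p 3) * (Equiv.swap (p 0) (p 1) * u) := by
    rw [hv_def, hg_def, hw_def, mul_inv_rev, mul_inv_rev, swap_inv, swap_inv, mul_assoc, inv_inv]
  have hw1c : Equiv.Perm.IsCycle (Equiv.swap (p 0) (p 1) * u) := by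
    have h' := h1.swap_mul (x := p 0) (by rw [hst0]; exact d01.symm)
      (by rw [hst0, hst1]; exact d02.symm)
    rwa [hst0] at h'
  have hw1ap2 : (Equiv.swap (p 0) (p 1) * u) (p 2) = p 3 := by
    rw [Equiv.Perm.mul_apply, hst2, Equiv.swap_apply_of_ne_of_ne d03.symm d13.symm]
  have hw1ap3 : (Equiv.swap (p 0) (p 1) * u) (p 3) = p 4 := by
    rw [Equiv.Perm.mul_apply, hst3, Equiv.swap_apply_of_ne_of_ne d04.symm d14.symm]
  have hvinvc : v⁻¹.IsCycle := by
    have h' := hw1c.swap_mul (x := p 2) (by rw [hw1ap2]; exact d23.symm)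
      (by rw [hw1ap2, hw1ap3]; exact d24.symm)
    rw [hw1ap2] at h'
    rwa [← hvinv] at h'
  have hvcyc : v.IsCycle := by
    have := hvinvc.inv
    rwa [inv_inv] at this
  have hvsupp : v.support = (Finset.univ.erase (p 0)).erase (p 2) := by
    rw [← Equiv.Perm.support_inv, hvinv]
    ext y
    simp only [Equiv.Perm.mem_support, Finset.mem_erase, Finset.mem_univ, and_true,
      Equiv.Perm.mul_apply]
    constructor
    · intro hne
      constructor
      · rintro rfl
        apply hne
        rw [hst2, Equiv.swap_apply_of_ne_of_ne d03.symm d13.symm, Equiv.swap_apply_right]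
      · rintro rfl
        apply hne
        rw [hst0, Equiv.swap_apply_right, Equiv.swap_apply_of_ne_of_ne d02 d03]
    · rintro ⟨hy2, hy0⟩ hEq
      by_cases hz0 : u y = p 0
      · rw [hz0, Equiv.swap_apply_left,
          Equiv.swap_apply_of_ne_of_ne d12 d13] at hEq
        rw [← hEq, hst1] at hz0
        exact d02 hz0.symm
      · by_cases hz1 : u y = p 1
        · exact hy0 (u.injective (by rw [hz1, hst0]))
        · by_cases hz2 : u y = p 2
          · rw [hz2, Equiv.swap_apply_of_ne_of_ne d02.symm d12.symm,
              Equiv.swap_apply_left] at hEq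
            rw [← hEq, hst3] at hz2
            exact d24 hz2.symm
          · by_cases hz3 : u y = p 3
            · exact hy2 (u.injective (by rw [hz3, hst2]))
            · rw [Equiv.swap_apply_of_ne_of_ne hz0 hz1,
                Equiv.swap_apply_of_ne_of_ne hz2 hz3] at hEq
              exact Equiv.Perm.mem_support.mp (h2 ▸ Finset.mem_univ y) hEq
  have hvcard : v.support.card = n - 2 := by
    rw [hvsupp, Finset.card_erase_of_mem (Finset.mem_erase.mpr ⟨d02.symm, Finset.mem_univ _⟩),
      Finset.card_erase_of_mem (Finset.mem_univ _), Finset.card_univ, Fintype.card_fin]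
    omega
  have hordv : orderOf v = n - 2 := by rw [hvcyc.orderOf, hvcard]
  -- signs
  have hsu : Equiv.Perm.sign u = 1 := by
    rw [h1.sign, hcard, Odd.neg_one_pow hodd, neg_neg]
  have hsv : Equiv.Perm.sign v = 1 := by
    rw [hv_def, hg_def, hw_def, map_mul, map_mul, map_inv, hsu,
      Equiv.Perm.sign_swap d01, Equiv.Perm.sign_swap d23]
    norm_num
  -- the closure
  set H := Subgroup.closure ({u, v} : Set (Equiv.Perm (Fin n))) with hH_def
  have huH : u ∈ H := Subgroup.subset_closure (Set.mem_insert _ _)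
  have hvH : v ∈ H := Subgroup.subset_closure (Set.mem_insert_of_mem _ rfl)
  have hgH : g ∈ H := hguv ▸ H.mul_mem huH hvH
  have hconjg : ∀ k : ℕ, u ^ k * g * (u ^ k)⁻¹
      = Equiv.swap (p k) (p (k + 1)) * Equiv.swap (p (k + 2)) (p (k + 3)) := by
    intro k
    rw [hg_def, hw_def]
    have e : u ^ k * (Equiv.swap (p 0) (p 1) * Equiv.swap (p 2) (p 3)) * (u ^ k)⁻¹
        = (u ^ k * Equiv.swap (p 0) (p 1) * (u ^ k)⁻¹)
          * (u ^ k * Equiv.swap (p 2) (p 3) * (u ^ k)⁻¹) := by group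
    rw [e, hswap, hswap]
    norm_num
  have hs : ∀ m : ℕ, w * Equiv.swap (p (2 * m)) (p (2 * m + 1)) ∈ H := by
    intro m
    induction m with
    | zero =>
      have e : w * Equiv.swap (p (2 * 0)) (p (2 * 0 + 1)) = 1 := by
        rw [hw_def]; norm_num
      rw [e]; exact H.one_mem
    | succ m ih =>
      have hmem : w * Equiv.swap (p (2 * m)) (p (2 * m + 1))
          * (u ^ (2 * m) * g * (u ^ (2 * m))⁻¹) ∈ H :=
        H.mul_mem ih (H.mul_mem (H.mul_mem (H.pow_mem huH _) hgH) (H.inv_mem (H.pow_mem huH _)))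
      have e : w * Equiv.swap (p (2 * (m + 1))) (p (2 * (m + 1) + 1))
          = w * Equiv.swap (p (2 * m)) (p (2 * m + 1)) * (u ^ (2 * m) * g * (u ^ (2 * m))⁻¹) := by
        rw [hconjg, show 2 * (m + 1) + 1 = 2 * m + 3 from by ring,
          show 2 * (m + 1) = 2 * m + 2 from by ring, mul_assoc, swap_mul_self_mul]
      rw [e]; exact hmem
  -- the three-cycle-like element w * swap (p 1) (p 2) is in H
  have hpn : ∀ i : ℕ, p (n + i) = p i := by
    intro i
    simp only [hp_def]
    rw [pow_add, hupow, one_mul]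
  have e0H : w * Equiv.swap (p 1) (p 2) ∈ H := by
    have h' := hs ((n + 1) / 2)
    have e1 : 2 * ((n + 1) / 2) = n + 1 := by
      obtain ⟨k, hk⟩ := hodd; omega
    rw [e1, show n + 1 + 1 = n + 2 from rfl, hpn 1, hpn 2] at h'
    exact h'
  -- normality of H under conjugation by w
  have hNu : w * u * w ∈ H := by
    have h' := hswap 1 0 1
    rw [pow_one] at h'
    norm_num at h'
    rw [← hw_def] at h'
    have e : w * u * w = (w * Equiv.swap (p 1) (p 2)) * u := by
      rw [← h']; group
    rw [e]; exact H.mul_mem e0H huH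
  have hwgw : w * g * w = g := by
    rw [hg_def, ← mul_assoc w w (Equiv.swap (p 2) (p 3)), hww, one_mul]
    exact hcommw.symm
  have hNv : w * v * w ∈ H := by
    have e : w * v * w = (w * u * w)⁻¹ * (w * g * w) := by
      rw [hv_def, mul_inv_rev, mul_inv_rev, hwi]
      simp only [mul_assoc, hwmul]
    rw [e]
    exact H.mul_mem (H.inv_mem hNu) (by rw [hwgw]; exact hgH)
  have hN : ∀ h ∈ H, w * h * w ∈ H := by
    intro h hh
    refine Subgroup.closure_induction ?_ ?_ ?_ ?_ hh
    · intro y hy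
      rcases hy with rfl | hy
      · exact hNu
      · rw [Set.mem_singleton_iff] at hy; subst hy; exact hNv
    · rw [mul_one, hww]; exact H.one_mem
    · intro a b _ _ ha hb
      have e : w * (a * b) * w = (w * a * w) * (w * b * w) := by
        simp only [mul_assoc, hwmul]
      rw [e]; exact H.mul_mem ha hb
    · intro a _ ha
      have e : w * a⁻¹ * w = (w * a * w)⁻¹ := by
        rw [mul_inv_rev, mul_inv_rev, hwi, mul_assoc]
      rw [e]; exact H.inv_mem ha
  -- H ≤ alternating group
  have hHle : H ≤ alternatingGroup (Fin n) := by
    rw [hH_def]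
    refine (Subgroup.closure_le _).mpr ?_
    rintro y hy
    rcases hy with rfl | hy
    · exact Equiv.Perm.mem_alternatingGroup.mpr hsu
    · rw [Set.mem_singleton_iff] at hy; subst hy
      exact Equiv.Perm.mem_alternatingGroup.mpr hsv
  -- the coset trick
  obtain ⟨K, hK⟩ := coset_subgroup H w hww hN
  have hKtop : ∀ τ : Equiv.Perm (Fin n), τ ∈ K := by
    have htop := closure_cycle_adjacent_swap h1 h2 x
    have hx01 : Equiv.swap x (u x) = w := by
      rw [hw_def]; simp [hp_def]
    rw [hx01] at htop
    intro τ
    have hτ : τ ∈ Subgroup.closure ({u, w} : Set (Equiv.Perm (Fin n))) :=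
      htop ▸ Subgroup.mem_top τ
    refine (Subgroup.closure_le K).mpr ?_ hτ
    rintro y hy
    rcases hy with rfl | hy
    · exact (hK y).mpr (Or.inl huH)
    · rw [Set.mem_singleton_iff] at hy; subst hy
      exact (hK y).mpr (Or.inr (by rw [hww]; exact H.one_mem))
  have hge : alternatingGroup (Fin n) ≤ H := by
    intro τ hτ
    rcases (hK τ).mp (hKtop τ) with h | h
    · exact h
    · exfalso
      have hs1 : Equiv.Perm.sign (w * τ) = 1 := Equiv.Perm.mem_alternatingGroup.mp (hHle h)
      rw [map_mul, hw_def, Equiv.Perm.sign_swap d01,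
        Equiv.Perm.mem_alternatingGroup.mp hτ, mul_one] at hs1
      exact absurd hs1 (by decide)
  have hclosure : H = alternatingGroup (Fin n) := le_antisymm hHle hge
  -- coprimality facts
  have hodd2 : Odd (n - 2) := by obtain ⟨k, hk⟩ := hodd; exact ⟨k - 1, by omega⟩
  have hcop2 : ∀ m : ℕ, Odd m → Nat.Coprime m 2 := by
    intro m hm
    obtain ⟨k, hk⟩ := hm
    refine Nat.Coprime.symm ((Nat.Prime.coprime_iff_not_dvd Nat.prime_two).mpr ?_)
    rintro ⟨c, hc⟩; omega
  have hcopn : Nat.Coprime n (n - 2) := by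
    have hd : Nat.gcd n (n - 2) ∣ 2 := by
      have h1' := Nat.gcd_dvd_left n (n - 2)
      have h2' := Nat.gcd_dvd_right n (n - 2)
      have h3' := Nat.dvd_sub h1' h2'
      simpa [show n - (n - 2) = 2 from by omega] using h3'
    rcases (Nat.dvd_prime Nat.prime_two).mp hd with h | h
    · exact h
    · exfalso
      have h1' := Nat.gcd_dvd_left n (n - 2)
      rw [h] at h1'
      obtain ⟨c, hc⟩ := h1'
      obtain ⟨k, hk⟩ := hodd
      omega
  refine ⟨u, v, Equiv.Perm.mem_alternatingGroup.mpr hsu, Equiv.Perm.mem_alternatingGroup.mpr hsv,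
    h1, hcard, hvcyc, hvcard, horder, hordv, hclosure, ?_, ?_, ?_⟩
  · rw [horder, hordv]; exact hcopn
  · rw [hordv, hguv, hordg]; exact hcop2 _ hodd2
  · rw [horder, hguv, hordg]; exact hcop2 _ hodd
end
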